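/- arXiv:1108.1419 — 2 statements merged into one kernel-verified Lean document; each statement's English description precedes it below -/
import Mathlib

section
/- Let A = {0, 1, …, s-1} with s ≥ 2, let R be a finite set of local rules on A all of radius r > 0, and let θ : ℤ → R be a distribution. Then H_θ is number-conserving if and only if for every j ∈ ℤ the word θ_{[j-2r, j]} does not belong to F_R, where F_R = { ψ ∈ R^{2r+1} : there exists u ∈ A^{2r+1} with ψ_{2r}(u) ≠ u_0 + Σ_{i=0}^{2r-1} [ ψ_{i+1}(0^{2r-i} u_{[1,i+1]}) − ψ_i(0^{2r-i} u_{[0,i]}) ] }. -/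
open Filter

/-- The r-ν-CA on the alphabet `A = {0, …, s-1}` induced by the distribution
`θ : ℤ → R`, where `rule ρ` is the local rule of radius `r` indexed by `ρ ∈ R`. -/
def nuCA (s r : ℕ) {R : Type*} (rule : R → (Fin (2 * r + 1) → Fin s) → Fin s)
    (θ : ℤ → R) (x : ℤ → Fin s) : ℤ → Fin s :=
  fun i => rule (θ i) (fun k => x (i - (r : ℤ) + (k : ℕ)))

/-- `H` is number-conserving: `H(0̄) = 0̄` and for every configuration `x ≠ 0̄`
the ratio of partial charges `μ_n(H(x))/μ_n(x)` converges to 1. -/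
def IsNC (s : ℕ) [NeZero s] (H : (ℤ → Fin s) → (ℤ → Fin s)) : Prop :=
  H 0 = 0 ∧ ∀ x : ℤ → Fin s, x ≠ 0 →
    Tendsto (fun n : ℕ =>
        ((∑ i ∈ Finset.Icc (-(n : ℤ)) (n : ℤ), ((H x i : ℕ))) : ℝ) /
        ((∑ i ∈ Finset.Icc (-(n : ℤ)) (n : ℤ), ((x i : ℕ))) : ℝ))
      atTop (nhds 1)

namespace NCAux
set_option linter.unusedSectionVars false
set_option linter.unusedVariables false
variable {s r : ℕ} [NeZero s] {R : Type*} (rule : R → (Fin (2 * r + 1) → Fin s) → Fin s) (θ : ℤ → R)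

def cut (a : ℤ) (x : ℤ → Fin s) : ℤ → Fin s := fun i => if i < a then 0 else x i
def hv (x : ℤ → Fin s) (c : ℤ) : ℤ := ((nuCA s r rule θ x c : ℕ) : ℤ)

/- generic finite sum helpers over `Finset.Icc` in ℤ -/
lemma sum_cells (g : ℤ → ℤ) (a : ℤ) (len : ℕ) :
    ∑ i ∈ Finset.range len, g (a + i) = ∑ c ∈ Finset.Icc a (a + len - 1), g c := by
  refine Finset.sum_nbij' (fun i => a + (i : ℤ)) (fun c => (c - a).toNat) ?_ ?_ ?_ ?_ ?_ <;>
    intro t ht <;> simp only [Finset.mem_Icc, Finset.mem_range] at * <;> omega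

lemma sum_Icc_split (g : ℤ → ℤ) (a b c : ℤ) (h1 : a ≤ b + 1) (h2 : b ≤ c) :
    ∑ t ∈ Finset.Icc a c, g t
      = ∑ t ∈ Finset.Icc a b, g t + ∑ t ∈ Finset.Icc (b + 1) c, g t := by
  rw [← Finset.sum_union]
  · congr 1; ext t
    simp only [Finset.mem_Icc, Finset.mem_union]; omega
  · rw [Finset.disjoint_left]
    intro t ht ht'
    simp only [Finset.mem_Icc] at ht ht'; omega

lemma sum_Icc_peel_left (g : ℤ → ℤ) (a b : ℤ) (h : a ≤ b) :
    ∑ t ∈ Finset.Icc a b, g t = g a + ∑ t ∈ Finset.Icc (a + 1) b, g t := by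
  rw [show Finset.Icc a b = insert a (Finset.Icc (a + 1) b) by
      ext t; simp only [Finset.mem_Icc, Finset.mem_insert]; omega,
    Finset.sum_insert (by simp only [Finset.mem_Icc]; omega)]

lemma sum_Icc_peel_right (g : ℤ → ℤ) (a b : ℤ) (h : a ≤ b) :
    ∑ t ∈ Finset.Icc a b, g t = ∑ t ∈ Finset.Icc a (b - 1), g t + g b := by
  rw [show Finset.Icc a b = insert b (Finset.Icc a (b - 1)) by
      ext t; simp only [Finset.mem_Icc, Finset.mem_insert]; omega,
    Finset.sum_insert (by simp only [Finset.mem_Icc]; omega)]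
  ring

lemma sum_Icc_telescope (f : ℤ → ℤ) (a : ℤ) (len : ℕ) :
    ∑ c ∈ Finset.Icc a (a + len - 1), (f (c + 1) - f c) = f (a + len) - f a := by
  have h := Finset.sum_range_sub (fun i : ℕ => f (a + i)) len
  simp only [Nat.cast_zero, add_zero] at h
  rw [← sum_cells, ← h]
  refine Finset.sum_congr rfl fun i _ => ?_
  congr 2
  push_cast; ring

lemma sum_Icc_shift (f : ℤ → ℤ) (a b d : ℤ) :
    ∑ c ∈ Finset.Icc a b, f (c - d) = ∑ c ∈ Finset.Icc (a - d) (b - d), f c := by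
  refine Finset.sum_nbij' (fun c => c - d) (fun c => c + d) ?_ ?_ ?_ ?_ ?_ <;>
    intro t ht <;> simp only [Finset.mem_Icc] at * <;> omega


lemma nuCA_congr {x y : ℤ → Fin s} (c : ℤ)
    (h : ∀ k : Fin (2 * r + 1), x (c - (r : ℤ) + (k : ℕ)) = y (c - (r : ℤ) + (k : ℕ))) :
    nuCA s r rule θ x c = nuCA s r rule θ y c :=
  congrArg (rule (θ c)) (funext h)

lemma nuCA_zero {x : ℤ → Fin s} (c : ℤ) (h0 : rule (θ c) (fun _ => 0) = 0)
    (h : ∀ k : Fin (2 * r + 1), x (c - (r : ℤ) + (k : ℕ)) = 0) :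
    nuCA s r rule θ x c = 0 := by
  show rule (θ c) _ = 0
  rw [show (fun k : Fin (2*r+1) => x (c - (r : ℤ) + (k : ℕ))) = (fun _ => 0) from funext h]
  exact h0

lemma termB (j : ℤ) (x : ℤ → Fin s) (u : Fin (2 * r + 1) → Fin s)
    (hu : ∀ t : Fin (2 * r + 1), x (j - (r : ℤ) + ((t : ℕ) : ℤ)) = u t) (i : Fin (2 * r)) :
    ((rule (θ (j - (2 * r : ℕ) + (i : ℕ)))
        (fun k : Fin (2 * r + 1) =>
          if hk : (k : ℕ) < 2 * r - (i : ℕ) then 0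
          else u ⟨(k : ℕ) - (2 * r - (i : ℕ)), by
            have h1 := k.isLt; omega⟩) : ℕ) : ℤ)
    = hv rule θ (cut (j - r) x) (j - (2 * r : ℕ) + (i : ℕ)) := by
  refine congrArg (fun w => ((rule (θ (j - (2 * r : ℕ) + (i : ℕ))) w : ℕ) : ℤ)) ?_
  funext k
  by_cases hk : (k : ℕ) < 2 * r - (i : ℕ)
  · rw [dif_pos hk]
    have hlt : j - (2 * r : ℕ) + (i : ℕ) - (r : ℤ) + (k : ℕ) < j - r := by
      have h2 := i.isLt; push_cast; omega
    simp only [cut, if_pos hlt]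
  · rw [dif_neg hk]
    rw [← hu ⟨(k : ℕ) - (2 * r - (i : ℕ)), by have h1 := k.isLt; omega⟩]
    have hge : ¬ (j - (2 * r : ℕ) + (i : ℕ) - (r : ℤ) + (k : ℕ) < j - r) := by
      push_cast; omega
    simp only [cut, if_neg hge]
    congr 1
    omega

lemma termA (j : ℤ) (x : ℤ → Fin s) (u : Fin (2 * r + 1) → Fin s)
    (hu : ∀ t : Fin (2 * r + 1), x (j - (r : ℤ) + ((t : ℕ) : ℤ)) = u t) (i : Fin (2 * r)) :
    ((rule (θ (j - (2 * r : ℕ) + (i : ℕ) + 1))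
        (fun k : Fin (2 * r + 1) =>
          if hk : (k : ℕ) < 2 * r - (i : ℕ) then 0
          else u ⟨(k : ℕ) - (2 * r - (i : ℕ)) + 1, by
            have h1 := k.isLt; have h2 := i.isLt; omega⟩) : ℕ) : ℤ)
    = hv rule θ (cut (j - r + 1) x) (j - (2 * r : ℕ) + (i : ℕ) + 1) := by
  refine congrArg (fun w => ((rule (θ (j - (2 * r : ℕ) + (i : ℕ) + 1)) w : ℕ) : ℤ)) ?_
  funext k
  by_cases hk : (k : ℕ) < 2 * r - (i : ℕ)
  · rw [dif_pos hk]
    have hlt : j - (2 * r : ℕ) + (i : ℕ) + 1 - (r : ℤ) + (k : ℕ) < j - r + 1 := by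
      have h2 := i.isLt; push_cast; omega
    simp only [cut, if_pos hlt]
  · rw [dif_neg hk]
    rw [← hu ⟨(k : ℕ) - (2 * r - (i : ℕ)) + 1, by have h1 := k.isLt; have h2 := i.isLt; omega⟩]
    have hge : ¬ (j - (2 * r : ℕ) + (i : ℕ) + 1 - (r : ℤ) + (k : ℕ) < j - r + 1) := by
      push_cast; omega
    simp only [cut, if_neg hge]
    congr 1
    omega



/-- The local-flow reformulation of the theorem's RHS at position `j`. -/
def Star (j : ℤ) (x : ℤ → Fin s) : Prop :=
  hv rule θ x j
    = ((x (j - (r : ℤ)) : ℕ) : ℤ)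
      + ∑ c ∈ Finset.Icc (j - (2 * r : ℕ) + 1) j, hv rule θ (cut (j - r + 1) x) c
      - ∑ c ∈ Finset.Icc (j - (2 * r : ℕ)) (j - 1), hv rule θ (cut (j - r) x) c

lemma main_bridge (j : ℤ) (x : ℤ → Fin s) (u : Fin (2 * r + 1) → Fin s)
    (hu : ∀ t : Fin (2 * r + 1), x (j - (r : ℤ) + ((t : ℕ) : ℤ)) = u t) :
    ( ((rule (θ j) u : ℕ) : ℤ) =
        ((u 0 : ℕ) : ℤ) +
        ∑ i : Fin (2 * r),
          ( ((rule (θ (j - (2 * r : ℕ) + (i : ℕ) + 1))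
                (fun k : Fin (2 * r + 1) =>
                  if hk : (k : ℕ) < 2 * r - (i : ℕ) then 0
                  else u ⟨(k : ℕ) - (2 * r - (i : ℕ)) + 1, by
                    have h1 := k.isLt; have h2 := i.isLt; omega⟩) : ℕ) : ℤ)
          - ((rule (θ (j - (2 * r : ℕ) + (i : ℕ)))
                (fun k : Fin (2 * r + 1) =>
                  if hk : (k : ℕ) < 2 * r - (i : ℕ) then 0
                  else u ⟨(k : ℕ) - (2 * r - (i : ℕ)), by
                    have h1 := k.isLt; omega⟩) : ℕ) : ℤ) ) )
    ↔ Star rule θ j x := by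
  have eL : ((rule (θ j) u : ℕ) : ℤ) = hv rule θ x j := by
    exact (congrArg (fun w => ((rule (θ j) w : ℕ) : ℤ)) (funext fun t => hu t)).symm
  have e0 : ((u 0 : ℕ) : ℤ) = ((x (j - (r : ℤ)) : ℕ) : ℤ) := by
    rw [← hu 0]
    norm_num
  rw [eL, e0]
  unfold Star
  simp only [termA rule θ j x u hu, termB rule θ j x u hu]
  rw [Finset.sum_sub_distrib]
  have e1 : ∑ i : Fin (2 * r), hv rule θ (cut (j - r + 1) x) (j - (2 * r : ℕ) + (i : ℕ) + 1)
      = ∑ c ∈ Finset.Icc (j - (2 * r : ℕ) + 1) j, hv rule θ (cut (j - r + 1) x) c := by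
    rw [Finset.sum_congr rfl (fun (m : Fin (2 * r)) _ =>
      congrArg (hv rule θ (cut (j - r + 1) x))
        (by push_cast; ring : j - (2 * r : ℕ) + ((m : ℕ) : ℤ) + 1 = (j - (2 * r : ℕ) + 1) + ((m : ℕ) : ℤ)))]
    rw [Fin.sum_univ_eq_sum_range (fun m : ℕ => hv rule θ (cut (j - r + 1) x) ((j - (2 * r : ℕ) + 1) + (m : ℤ))) (2 * r)]
    rw [sum_cells]
    rw [show (j - (2 * r : ℕ) + 1) + ((2 * r : ℕ) : ℤ) - 1 = j by push_cast; ring]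
  have e2 : ∑ i : Fin (2 * r), hv rule θ (cut (j - r) x) (j - (2 * r : ℕ) + (i : ℕ))
      = ∑ c ∈ Finset.Icc (j - (2 * r : ℕ)) (j - 1), hv rule θ (cut (j - r) x) c := by
    rw [Fin.sum_univ_eq_sum_range (fun m : ℕ => hv rule θ (cut (j - r) x) (j - (2 * r : ℕ) + (m : ℤ))) (2 * r)]
    rw [sum_cells]
    rw [show (j - (2 * r : ℕ)) + ((2 * r : ℕ) : ℤ) - 1 = j - 1 by push_cast; ring]
  rw [e1, e2]
  constructor <;> intro h <;> linarith

lemma cut_zero (a : ℤ) : cut a (0 : ℤ → Fin s) = 0 := funext fun i => by simp [cut]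

lemma nuCA_zero_config (c : ℤ) :
    nuCA s r rule θ 0 c = rule (θ c) (fun _ => 0) := rfl

lemma rule_zero_of_star (hr : 0 < r) (hstar : ∀ j : ℤ, Star rule θ j 0) (c : ℤ) :
    rule (θ c) (fun _ => 0) = 0 := by
  have hrz : (1 : ℤ) ≤ (r : ℤ) := by exact_mod_cast hr
  have h := hstar (c + (2 * r : ℕ))
  unfold Star at h
  rw [cut_zero, cut_zero] at h
  rw [show c + ((2 * r : ℕ) : ℤ) - ((2 * r : ℕ) : ℤ) + 1 = c + 1 by ring] at h
  rw [show c + ((2 * r : ℕ) : ℤ) - ((2 * r : ℕ) : ℤ) = c by ring] at h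
  rw [sum_Icc_peel_right (fun t => hv rule θ 0 t) (c + 1) (c + (2 * r : ℕ))
    (by push_cast; omega)] at h
  rw [sum_Icc_peel_left (fun t => hv rule θ 0 t) c (c + (2 * r : ℕ) - 1)
    (by push_cast; omega)] at h
  simp only [Pi.zero_apply] at h
  rw [show (((0 : Fin s) : ℕ) : ℤ) = 0 by simp] at h
  have hc : hv rule θ 0 c = 0 := by linarith
  have hc' : (nuCA s r rule θ 0 c : ℕ) = 0 := by unfold hv at hc; exact_mod_cast hc
  have h2 : nuCA s r rule θ 0 c = 0 := by apply Fin.ext; simp [hc']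
  rw [← nuCA_zero_config rule θ c]
  exact h2

/-- the "flux" term -/
noncomputable def T (x : ℤ → Fin s) (j : ℤ) : ℤ :=
  ∑ c ∈ Finset.Icc (j - (2 * r : ℕ)) (j - 1), hv rule θ (cut (j - r) x) c

lemma star_T (hstar : ∀ (j : ℤ) (x : ℤ → Fin s), Star rule θ j x) (x : ℤ → Fin s) (j : ℤ) :
    hv rule θ x j = ((x (j - (r : ℤ)) : ℕ) : ℤ) + T rule θ x (j + 1) - T rule θ x j := by
  have h := hstar j x
  unfold Star at h
  unfold T
  rw [show j + 1 - ((2 * r : ℕ) : ℤ) = j - (2 * r : ℕ) + 1 by ring,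
    show j + 1 - 1 = j by ring,
    show j + 1 - (r : ℤ) = j - r + 1 by ring]
  exact h

lemma partial_sum (hstar : ∀ (j : ℤ) (x : ℤ → Fin s), Star rule θ j x)
    (x : ℤ → Fin s) (n : ℕ) :
    ∑ c ∈ Finset.Icc (-(n : ℤ)) (n : ℤ), hv rule θ x c
      = ∑ c ∈ Finset.Icc (-(n : ℤ)) (n : ℤ), ((x (c - (r : ℤ)) : ℕ) : ℤ)
        + T rule θ x ((n : ℤ) + 1) - T rule θ x (-(n : ℤ)) := by
  have e : ∀ c ∈ Finset.Icc (-(n : ℤ)) (n : ℤ),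
      hv rule θ x c = ((x (c - (r : ℤ)) : ℕ) : ℤ) + (T rule θ x (c + 1) - T rule θ x c) :=
    fun c _ => by have := star_T rule θ hstar x c; linarith
  rw [Finset.sum_congr rfl e, Finset.sum_add_distrib]
  have tel := sum_Icc_telescope (T rule θ x) (-(n : ℤ)) (2 * n + 1)
  rw [show -(n : ℤ) + ((2 * n + 1 : ℕ) : ℤ) - 1 = (n : ℤ) by push_cast; ring] at tel
  rw [show -(n : ℤ) + ((2 * n + 1 : ℕ) : ℤ) = (n : ℤ) + 1 by push_cast; ring] at tel
  rw [tel]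
  ring

lemma hv_bounds (x : ℤ → Fin s) (c : ℤ) : 0 ≤ hv rule θ x c ∧ hv rule θ x c ≤ (s : ℤ) := by
  unfold hv
  constructor
  · positivity
  · exact_mod_cast Nat.le_of_lt (Fin.is_lt _)

lemma xv_bounds (x : ℤ → Fin s) (c : ℤ) :
    0 ≤ ((x c : ℕ) : ℤ) ∧ ((x c : ℕ) : ℤ) ≤ (s : ℤ) := by
  constructor
  · positivity
  · exact_mod_cast Nat.le_of_lt (Fin.is_lt _)

lemma sum_Icc_bounds (g : ℤ → ℤ) (a b : ℤ) (K : ℤ) (h : ∀ c, 0 ≤ g c ∧ g c ≤ K) :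
    0 ≤ ∑ c ∈ Finset.Icc a b, g c ∧
      ∑ c ∈ Finset.Icc a b, g c ≤ ((b + 1 - a).toNat : ℤ) * K := by
  refine ⟨Finset.sum_nonneg fun c _ => (h c).1, ?_⟩
  calc ∑ c ∈ Finset.Icc a b, g c ≤ (Finset.Icc a b).card • K :=
        Finset.sum_le_card_nsmul _ _ _ (fun c _ => (h c).2)
    _ = ((b + 1 - a).toNat : ℤ) * K := by rw [Int.card_Icc]; simp [nsmul_eq_mul]

lemma T_bounds (x : ℤ → Fin s) (j : ℤ) :
    0 ≤ T rule θ x j ∧ T rule θ x j ≤ ((2 * r : ℕ) : ℤ) * (s : ℤ) := by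
  unfold T
  have h := sum_Icc_bounds (hv rule θ (cut (j - r) x)) (j - (2 * r : ℕ)) (j - 1) (s : ℤ)
    (hv_bounds rule θ _)
  rwa [show ((j - 1 + 1 - (j - ((2 * r : ℕ) : ℤ))).toNat : ℤ) = ((2 * r : ℕ) : ℤ) by omega] at h

lemma diff_bound (hstar : ∀ (j : ℤ) (x : ℤ → Fin s), Star rule θ j x)
    (x : ℤ → Fin s) (n : ℕ) (hn : r ≤ n) :
    |∑ c ∈ Finset.Icc (-(n : ℤ)) (n : ℤ), hv rule θ x c
      - ∑ c ∈ Finset.Icc (-(n : ℤ)) (n : ℤ), ((x c : ℕ) : ℤ)| ≤ ((6 * r * s : ℕ) : ℤ) := by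
  have hrn : (r : ℤ) ≤ (n : ℤ) := by exact_mod_cast hn
  rw [partial_sum rule θ hstar x n]
  rw [sum_Icc_shift (fun c => ((x c : ℕ) : ℤ)) (-(n : ℤ)) (n : ℤ) (r : ℤ)]
  have split1 := sum_Icc_split (fun c => ((x c : ℕ) : ℤ)) (-(n : ℤ) - r) (-(n : ℤ) - 1)
    ((n : ℤ) - r) (by omega) (by omega)
  rw [show -(n : ℤ) - 1 + 1 = -(n : ℤ) by ring] at split1
  have split2 := sum_Icc_split (fun c => ((x c : ℕ) : ℤ)) (-(n : ℤ)) ((n : ℤ) - r)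
    (n : ℤ) (by omega) (by omega)
  have B1 := sum_Icc_bounds (fun c => ((x c : ℕ) : ℤ)) (-(n : ℤ) - r) (-(n : ℤ) - 1) (s : ℤ)
    (xv_bounds x)
  have B2 := sum_Icc_bounds (fun c => ((x c : ℕ) : ℤ)) ((n : ℤ) - r + 1) (n : ℤ) (s : ℤ)
    (xv_bounds x)
  rw [show ((-(n : ℤ) - 1 + 1 - (-(n : ℤ) - (r : ℤ))).toNat : ℤ) = (r : ℤ) by omega] at B1
  rw [show (((n : ℤ) + 1 - ((n : ℤ) - (r : ℤ) + 1)).toNat : ℤ) = (r : ℤ) by omega] at B2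
  have T1 := T_bounds rule θ x ((n : ℤ) + 1)
  have T2 := T_bounds rule θ x (-(n : ℤ))
  rw [split1, split2]
  push_cast at B1 B2 T1 T2 ⊢
  rw [abs_le]
  constructor <;> nlinarith [B1.1, B1.2, B2.1, B2.2, T1.1, T1.2, T2.1, T2.2]

lemma den_mono (x : ℤ → Fin s) :
    Monotone (fun n : ℕ => ∑ i ∈ Finset.Icc (-(n : ℤ)) (n : ℤ), ((x i : ℕ))) := by
  intro a b hab
  apply Finset.sum_le_sum_of_subset
  intro t ht
  simp only [Finset.mem_Icc] at *
  omega

lemma tendsto_main (hr : 0 < r) (hstar : ∀ (j : ℤ) (x : ℤ → Fin s), Star rule θ j x)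
    (hrule0 : ∀ c, rule (θ c) (fun _ => 0) = 0)
    (x : ℤ → Fin s) (hx : x ≠ 0) :
    Filter.Tendsto (fun n : ℕ =>
        ((∑ i ∈ Finset.Icc (-(n : ℤ)) (n : ℤ), ((nuCA s r rule θ x i : ℕ))) : ℝ) /
        ((∑ i ∈ Finset.Icc (-(n : ℤ)) (n : ℤ), ((x i : ℕ))) : ℝ))
      Filter.atTop (nhds 1) := by
  set num : ℕ → ℕ := fun n => ∑ i ∈ Finset.Icc (-(n : ℤ)) (n : ℤ), (nuCA s r rule θ x i : ℕ)
    with hnumdef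
  set den : ℕ → ℕ := fun n => ∑ i ∈ Finset.Icc (-(n : ℤ)) (n : ℤ), ((x i : ℕ)) with hdendef
  have hcastnum : ∀ n : ℕ, ((num n : ℕ) : ℤ)
      = ∑ c ∈ Finset.Icc (-(n : ℤ)) (n : ℤ), hv rule θ x c := by
    intro n
    rw [hnumdef]
    unfold hv
    exact Nat.cast_sum _ _
  have hcastden : ∀ n : ℕ, ((den n : ℕ) : ℤ)
      = ∑ c ∈ Finset.Icc (-(n : ℤ)) (n : ℤ), ((x c : ℕ) : ℤ) := by
    intro n
    rw [hdendef]
    exact Nat.cast_sum _ _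
  have hnumR : ∀ n : ℕ,
      ((∑ i ∈ Finset.Icc (-(n : ℤ)) (n : ℤ), ((nuCA s r rule θ x i : ℕ))) : ℝ)
        = ((num n : ℕ) : ℝ) := by
    intro n
    rw [hnumdef]
    exact (Nat.cast_sum _ _).symm
  have hdenR0 : ∀ n : ℕ,
      ((∑ i ∈ Finset.Icc (-(n : ℤ)) (n : ℤ), ((x i : ℕ))) : ℝ)
        = ((den n : ℕ) : ℝ) := by
    intro n
    rw [hdendef]
    exact (Nat.cast_sum _ _).symm
  have hbound : ∀ n : ℕ, r ≤ n → |((num n : ℕ) : ℤ) - ((den n : ℕ) : ℤ)| ≤ ((6 * r * s : ℕ) : ℤ) := by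
    intro n hn
    rw [hcastnum, hcastden]
    exact diff_bound rule θ hstar x n hn
  obtain ⟨i0, hi0⟩ := Function.ne_iff.mp hx
  have hxi0 : 1 ≤ (x i0 : ℕ) := by
    rcases Nat.eq_zero_or_pos (x i0 : ℕ) with h | h
    · exact absurd (Fin.ext (by simpa using h) : x i0 = 0) (by simpa using hi0)
    · exact h
  have hden1 : ∀ n : ℕ, i0.natAbs ≤ n → 1 ≤ den n := by
    intro n hn
    have hmem : i0 ∈ Finset.Icc (-(n : ℤ)) (n : ℤ) := by
      simp only [Finset.mem_Icc]
      omega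
    have hle : (x i0 : ℕ) ≤ ∑ i ∈ Finset.Icc (-(n : ℤ)) (n : ℤ), ((x i : ℕ)) :=
      Finset.single_le_sum (f := fun i : ℤ => ((x i : ℕ)))
        (fun i _ => Nat.zero_le _) hmem
    rw [hdendef]
    show 1 ≤ ∑ i ∈ Finset.Icc (-(n : ℤ)) (n : ℤ), ((x i : ℕ))
    omega
  by_cases hfin : ∃ N : ℕ, ∀ i : ℤ, N < i.natAbs → x i = 0
  · obtain ⟨N, hN⟩ := hfin
    have heq : ∀ n : ℕ, N + r ≤ n → num n = den n := by
      intro n hn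
      have hn' : (N : ℤ) + r ≤ n := by exact_mod_cast hn
      have hzint : ((num n : ℕ) : ℤ) = ((den n : ℕ) : ℤ) := by
        rw [hcastnum, hcastden, partial_sum rule θ hstar x n]
        rw [sum_Icc_shift (fun c => ((x c : ℕ) : ℤ)) (-(n : ℤ)) (n : ℤ) (r : ℤ)]
        have hT1 : T rule θ x ((n : ℤ) + 1) = 0 := by
          apply Finset.sum_eq_zero
          intro c hc
          simp only [Finset.mem_Icc] at hc
          have hwin : ∀ k : Fin (2 * r + 1),
              cut ((n : ℤ) + 1 - (r : ℤ)) x (c - (r : ℤ) + ((k : ℕ) : ℤ)) = 0 := by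
            intro k
            have hk := k.isLt
            unfold cut
            split
            · rfl
            · exact hN _ (by omega)
          unfold hv
          simp [nuCA_zero rule θ c (hrule0 c) hwin]
        have hT2 : T rule θ x (-(n : ℤ)) = 0 := by
          apply Finset.sum_eq_zero
          intro c hc
          simp only [Finset.mem_Icc] at hc
          have hwin : ∀ k : Fin (2 * r + 1),
              cut (-(n : ℤ) - (r : ℤ)) x (c - (r : ℤ) + ((k : ℕ) : ℤ)) = 0 := by
            intro k
            have hk := k.isLt
            unfold cut
            split
            · rfl
            · exact hN _ (by omega)
          unfold hv
          simp [nuCA_zero rule θ c (hrule0 c) hwin]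
        rw [hT1, hT2]
        have hs1 : ∑ c ∈ Finset.Icc (-(n : ℤ) - r) ((n : ℤ) - r), ((x c : ℕ) : ℤ)
            = ∑ c ∈ Finset.Icc (-(N : ℤ)) (N : ℤ), ((x c : ℕ) : ℤ) := by
          symm
          apply Finset.sum_subset
          · intro t ht
            simp only [Finset.mem_Icc] at *
            omega
          · intro t _ ht'
            simp only [Finset.mem_Icc] at ht'
            rw [hN t (by omega)]
            simp
        have hs2 : ∑ c ∈ Finset.Icc (-(n : ℤ)) (n : ℤ), ((x c : ℕ) : ℤ)
            = ∑ c ∈ Finset.Icc (-(N : ℤ)) (N : ℤ), ((x c : ℕ) : ℤ) := by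
          symm
          apply Finset.sum_subset
          · intro t ht
            simp only [Finset.mem_Icc] at *
            omega
          · intro t _ ht'
            simp only [Finset.mem_Icc] at ht'
            rw [hN t (by omega)]
            simp
        rw [hs1, hs2]
        ring
      exact_mod_cast hzint
    refine Filter.Tendsto.congr' ?_ (tendsto_const_nhds (x := (1 : ℝ)))
    filter_upwards [Filter.eventually_ge_atTop (max (N + r) i0.natAbs)] with n hn
    have h1 : num n = den n := heq n (le_trans (le_max_left _ _) hn)
    have h2 : 1 ≤ den n := hden1 n (le_trans (le_max_right _ _) hn)
    have hpos : (0 : ℝ) < ((den n : ℕ) : ℝ) := by exact_mod_cast h2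
    rw [hnumR n, hdenR0 n, h1]
    exact (div_self (ne_of_gt hpos)).symm
  · push_neg at hfin
    have hunb : ∀ m : ℕ, ∃ n : ℕ, m ≤ den n := by
      intro m
      induction m with
      | zero => exact ⟨0, Nat.zero_le _⟩
      | succ m ih =>
        obtain ⟨n, hn⟩ := ih
        obtain ⟨i, hi, hxi⟩ := hfin n
        have hxi1 : 1 ≤ (x i : ℕ) := by
          rcases Nat.eq_zero_or_pos (x i : ℕ) with h | h
          · exact absurd (Fin.ext (by simpa using h) : x i = 0) hxi
          · exact h
        refine ⟨i.natAbs, ?_⟩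
        have hnotmem : i ∉ Finset.Icc (-(n : ℤ)) (n : ℤ) := by
          simp only [Finset.mem_Icc]
          omega
        have hsub : insert i (Finset.Icc (-(n : ℤ)) (n : ℤ))
            ⊆ Finset.Icc (-(i.natAbs : ℤ)) (i.natAbs : ℤ) := by
          intro t ht
          simp only [Finset.mem_insert, Finset.mem_Icc] at *
          omega
        calc m + 1 ≤ den n + (x i : ℕ) := by omega
          _ = ∑ t ∈ insert i (Finset.Icc (-(n : ℤ)) (n : ℤ)), ((x t : ℕ)) := by
              rw [Finset.sum_insert hnotmem]
              ring
          _ ≤ den i.natAbs := Finset.sum_le_sum_of_subset hsub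
    have hmono : Monotone den := den_mono x
    have htop : Filter.Tendsto den Filter.atTop Filter.atTop :=
      Filter.tendsto_atTop_atTop_of_monotone hmono (fun b => hunb b)
    have hdenR : Filter.Tendsto (fun n : ℕ => ((den n : ℕ) : ℝ)) Filter.atTop Filter.atTop :=
      tendsto_natCast_atTop_atTop.comp htop
    have hK0 : Filter.Tendsto (fun n : ℕ => (((6 * r * s : ℕ) : ℝ)) / ((den n : ℕ) : ℝ))
        Filter.atTop (nhds 0) := tendsto_const_nhds.div_atTop hdenR
    have hlow : Filter.Tendsto (fun n : ℕ => 1 - (((6 * r * s : ℕ) : ℝ)) / ((den n : ℕ) : ℝ))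
        Filter.atTop (nhds 1) := by
      have := (tendsto_const_nhds (x := (1 : ℝ)) (f := Filter.atTop (α := ℕ))).sub hK0
      simpa using this
    have hhigh : Filter.Tendsto (fun n : ℕ => 1 + (((6 * r * s : ℕ) : ℝ)) / ((den n : ℕ) : ℝ))
        Filter.atTop (nhds 1) := by
      have := (tendsto_const_nhds (x := (1 : ℝ)) (f := Filter.atTop (α := ℕ))).add hK0
      simpa using this
    obtain ⟨n1, hn1⟩ := hunb 1
    refine tendsto_of_tendsto_of_tendsto_of_le_of_le' hlow hhigh ?_ ?_
    · filter_upwards [Filter.eventually_ge_atTop (max r n1)] with n hn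
      have hdn : 1 ≤ den n := le_trans hn1 (hmono (le_trans (le_max_right _ _) hn))
      have hposn : (0 : ℝ) < ((den n : ℕ) : ℝ) := by exact_mod_cast hdn
      have hb := hbound n (le_trans (le_max_left _ _) hn)
      rw [abs_le] at hb
      have hlb : ((den n : ℕ) : ℝ) - ((6 * r * s : ℕ) : ℝ) ≤ ((num n : ℕ) : ℝ) := by
        have : ((den n : ℕ) : ℤ) - ((6 * r * s : ℕ) : ℤ) ≤ ((num n : ℕ) : ℤ) := by omega
        exact_mod_cast this
      have e : 1 - (((6 * r * s : ℕ) : ℝ)) / ((den n : ℕ) : ℝ)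
          = (((den n : ℕ) : ℝ) - ((6 * r * s : ℕ) : ℝ)) / ((den n : ℕ) : ℝ) := by
        field_simp
      rw [e, hnumR n, hdenR0 n]
      gcongr
    · filter_upwards [Filter.eventually_ge_atTop (max r n1)] with n hn
      have hdn : 1 ≤ den n := le_trans hn1 (hmono (le_trans (le_max_right _ _) hn))
      have hposn : (0 : ℝ) < ((den n : ℕ) : ℝ) := by exact_mod_cast hdn
      have hb := hbound n (le_trans (le_max_left _ _) hn)
      rw [abs_le] at hb
      have hub : ((num n : ℕ) : ℝ) ≤ ((den n : ℕ) : ℝ) + ((6 * r * s : ℕ) : ℝ) := by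
        have : ((num n : ℕ) : ℤ) ≤ ((den n : ℕ) : ℤ) + ((6 * r * s : ℕ) : ℤ) := by omega
        exact_mod_cast this
      have e : 1 + (((6 * r * s : ℕ) : ℝ)) / ((den n : ℕ) : ℝ)
          = (((den n : ℕ) : ℝ) + ((6 * r * s : ℕ) : ℝ)) / ((den n : ℕ) : ℝ) := by
        field_simp
      rw [e, hnumR n, hdenR0 n]
      gcongr

lemma isNC_of_star (hr : 0 < r) (hstar : ∀ (j : ℤ) (x : ℤ → Fin s), Star rule θ j x) :
    IsNC s (nuCA s r rule θ) := by
  have hrule0 : ∀ c, rule (θ c) (fun _ => 0) = 0 :=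
    rule_zero_of_star rule θ hr (fun j => hstar j 0)
  refine ⟨funext fun c => ?_, ?_⟩
  · rw [nuCA_zero_config rule θ c]
    exact hrule0 c
  · intro x hx
    exact tendsto_main rule θ hr hstar hrule0 x hx

def emb (u : Fin (2 * r + 1) → Fin s) (j : ℤ) : ℤ → Fin s :=
  fun i => if h : j - r ≤ i ∧ i ≤ j + r then u ⟨(i - (j - r)).toNat, by omega⟩ else 0

lemma emb_spec (u : Fin (2 * r + 1) → Fin s) (j : ℤ) (t : Fin (2 * r + 1)) :
    emb u j (j - (r : ℤ) + ((t : ℕ) : ℤ)) = u t := by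
  have ht := t.isLt
  unfold emb
  rw [dif_pos (by constructor <;> omega)]
  congr 1
  apply Fin.ext
  show (j - (r : ℤ) + ((t : ℕ) : ℤ) - (j - (r : ℤ))).toNat = (t : ℕ)
  omega

lemma emb_outside (u : Fin (2 * r + 1) → Fin s) (j : ℤ) (i : ℤ)
    (h : i < j - r ∨ j + r < i) : emb u j i = 0 := by
  unfold emb
  rw [dif_neg (by omega)]

lemma mu_eq (hNC : IsNC s (nuCA s r rule θ)) (x : ℤ → Fin s) (a b : ℤ) (hab : a ≤ b)
    (hsupp : ∀ i : ℤ, i < a ∨ b < i → x i = 0) :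
    ∑ c ∈ Finset.Icc (a - (2 * r : ℕ)) (b + (2 * r : ℕ)), ((nuCA s r rule θ x c : ℕ))
      = ∑ i ∈ Finset.Icc a b, ((x i : ℕ)) := by
  obtain ⟨hH0, hlim⟩ := hNC
  have hrule0 : ∀ c : ℤ, rule (θ c) (fun _ => 0) = 0 := by
    intro c
    have h := congrFun hH0 c
    rw [nuCA_zero_config rule θ c] at h
    simpa using h
  by_cases hx : x = 0
  · subst hx
    rw [Finset.sum_eq_zero, Finset.sum_eq_zero]
    · intro i _
      simp
    · intro c _
      rw [congrFun hH0 c]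
      simp
  · obtain ⟨i0, hi0⟩ := Function.ne_iff.mp hx
    have hx0 : x i0 ≠ 0 := by simpa using hi0
    have hi0mem : a ≤ i0 ∧ i0 ≤ b := by
      by_contra hcon
      exact hx0 (hsupp i0 (by omega))
    have hMpos : 1 ≤ ∑ i ∈ Finset.Icc a b, ((x i : ℕ)) := by
      have hmem : i0 ∈ Finset.Icc a b := by
        simp only [Finset.mem_Icc]
        omega
      have hle : (x i0 : ℕ) ≤ ∑ i ∈ Finset.Icc a b, ((x i : ℕ)) :=
        Finset.single_le_sum (f := fun i : ℤ => ((x i : ℕ))) (fun i _ => Nat.zero_le _) hmem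
      have hxi0 : 1 ≤ (x i0 : ℕ) :=
        Nat.one_le_iff_ne_zero.mpr (fun h => hx0 (Fin.ext (by simpa using h)))
      omega
    set L := ∑ c ∈ Finset.Icc (a - ((2 * r : ℕ) : ℤ)) (b + ((2 * r : ℕ) : ℤ)),
        ((nuCA s r rule θ x c : ℕ)) with hL
    set M := ∑ i ∈ Finset.Icc a b, ((x i : ℕ)) with hM
    have hev : (fun n : ℕ =>
        ((∑ i ∈ Finset.Icc (-(n : ℤ)) (n : ℤ), ((nuCA s r rule θ x i : ℕ))) : ℝ) /
        ((∑ i ∈ Finset.Icc (-(n : ℤ)) (n : ℤ), ((x i : ℕ))) : ℝ))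
        =ᶠ[Filter.atTop] (fun _ => ((L : ℕ) : ℝ) / ((M : ℕ) : ℝ)) := by
      filter_upwards [Filter.eventually_ge_atTop
        ((a - ((2 * r : ℕ) : ℤ)).natAbs ⊔ (b + ((2 * r : ℕ) : ℤ)).natAbs)] with n hn
      have hn1 : (a - ((2 * r : ℕ) : ℤ)).natAbs ≤ n := le_trans (le_max_left _ _) hn
      have hn2 : (b + ((2 * r : ℕ) : ℤ)).natAbs ≤ n := le_trans (le_max_right _ _) hn
      have e1 : ∑ i ∈ Finset.Icc (-(n : ℤ)) (n : ℤ), ((nuCA s r rule θ x i : ℕ)) = L := by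
        rw [hL]
        symm
        apply Finset.sum_subset
        · intro t ht
          simp only [Finset.mem_Icc] at *
          omega
        · intro c hc hc'
          simp only [Finset.mem_Icc] at hc hc'
          simp [nuCA_zero rule θ c (hrule0 c)
            (fun k => hsupp _ (by have hk := k.isLt; omega))]
      have e2 : ∑ i ∈ Finset.Icc (-(n : ℤ)) (n : ℤ), ((x i : ℕ)) = M := by
        rw [hM]
        symm
        apply Finset.sum_subset
        · intro t ht
          simp only [Finset.mem_Icc] at *
          omega
        · intro c hc hc'
          simp only [Finset.mem_Icc] at hc hc'
          rw [hsupp c (by omega)]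
          simp
      have e1R : ((∑ i ∈ Finset.Icc (-(n : ℤ)) (n : ℤ), ((nuCA s r rule θ x i : ℕ))) : ℝ)
          = ((L : ℕ) : ℝ) := by
        rw [← e1]
        exact (Nat.cast_sum _ _).symm
      have e2R : ((∑ i ∈ Finset.Icc (-(n : ℤ)) (n : ℤ), ((x i : ℕ))) : ℝ)
          = ((M : ℕ) : ℝ) := by
        rw [← e2]
        exact (Nat.cast_sum _ _).symm
      rw [e1R, e2R]
    have h1 := Filter.Tendsto.congr' hev (hlim x hx)
    have h2 : (1 : ℝ) = ((L : ℕ) : ℝ) / ((M : ℕ) : ℝ) := tendsto_nhds_unique h1 tendsto_const_nhds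
    have hMne : ((M : ℕ) : ℝ) ≠ 0 := by
      have : (0 : ℝ) < ((M : ℕ) : ℝ) := by exact_mod_cast hMpos
      exact ne_of_gt this
    rw [eq_div_iff hMne, one_mul] at h2
    exact_mod_cast h2.symm

lemma star_of_NC (hr : 0 < r) (hNC : IsNC s (nuCA s r rule θ)) (j : ℤ)
    (u : Fin (2 * r + 1) → Fin s) : Star rule θ j (emb u j) := by
  have hrule0 : ∀ c : ℤ, rule (θ c) (fun _ => 0) = 0 := by
    intro c
    have h := congrFun hNC.1 c
    rw [nuCA_zero_config rule θ c] at h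
    simpa using h
  set x := emb u j with hxdef
  have hsupp : ∀ i : ℤ, i < j - r ∨ j + r < i → x i = 0 := fun i h => emb_outside u j i h
  have hsupp' : ∀ i : ℤ, i < j - r + 1 ∨ j + r < i → cut (j - r + 1) x i = 0 := by
    intro i h
    unfold cut
    split
    · rfl
    · exact hsupp i (by omega)
  have hcuteq : cut (j - r) x = x := by
    funext i
    unfold cut
    split
    · exact (hsupp i (by omega)).symm
    · rfl
  have hcut1 : ∀ i : ℤ, j - r + 1 ≤ i → cut (j - r + 1) x i = x i := by
    intro i h
    unfold cut
    rw [if_neg (by omega)]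
  have h1 := mu_eq rule θ hNC x (j - r) (j + r) (by omega) hsupp
  have h2 := mu_eq rule θ hNC (cut (j - r + 1) x) (j - r + 1) (j + r) (by omega) hsupp'
  have h1' : ∑ c ∈ Finset.Icc (j - (r : ℤ) - (2 * r : ℕ)) (j + (r : ℤ) + (2 * r : ℕ)),
        ((nuCA s r rule θ x c : ℕ) : ℤ)
      = ∑ i ∈ Finset.Icc (j - (r : ℤ)) (j + (r : ℤ)), ((x i : ℕ) : ℤ) := by
    rw [← Nat.cast_sum, ← Nat.cast_sum, h1]
  have h2' : ∑ c ∈ Finset.Icc (j - (r : ℤ) + 1 - (2 * r : ℕ)) (j + (r : ℤ) + (2 * r : ℕ)),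
        ((nuCA s r rule θ (cut (j - r + 1) x) c : ℕ) : ℤ)
      = ∑ i ∈ Finset.Icc (j - (r : ℤ) + 1) (j + (r : ℤ)), ((cut (j - r + 1) x i : ℕ) : ℤ) := by
    rw [← Nat.cast_sum, ← Nat.cast_sum, h2]
  have split1 := sum_Icc_split (fun c => ((nuCA s r rule θ x c : ℕ) : ℤ))
      (j - (r : ℤ) - (2 * r : ℕ)) j (j + (r : ℤ) + (2 * r : ℕ)) (by omega) (by omega)
  have split2 := sum_Icc_split (fun c => ((nuCA s r rule θ (cut (j - r + 1) x) c : ℕ) : ℤ))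
      (j - (r : ℤ) + 1 - (2 * r : ℕ)) j (j + (r : ℤ) + (2 * r : ℕ)) (by omega) (by omega)
  have hupper : ∑ c ∈ Finset.Icc (j + 1) (j + (r : ℤ) + (2 * r : ℕ)),
        ((nuCA s r rule θ x c : ℕ) : ℤ)
      = ∑ c ∈ Finset.Icc (j + 1) (j + (r : ℤ) + (2 * r : ℕ)),
        ((nuCA s r rule θ (cut (j - r + 1) x) c : ℕ) : ℤ) := by
    refine Finset.sum_congr rfl fun c hc => ?_
    simp only [Finset.mem_Icc] at hc
    exact congrArg (fun v : Fin s => ((v : ℕ) : ℤ))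
      (nuCA_congr rule θ c (fun k => (hcut1 _ (by have hk := k.isLt; omega)).symm))
  have trim1 : ∑ c ∈ Finset.Icc (j - ((2 * r : ℕ) : ℤ)) j, ((nuCA s r rule θ x c : ℕ) : ℤ)
      = ∑ c ∈ Finset.Icc (j - (r : ℤ) - (2 * r : ℕ)) j, ((nuCA s r rule θ x c : ℕ) : ℤ) := by
    apply Finset.sum_subset
    · intro t ht
      simp only [Finset.mem_Icc] at *
      omega
    · intro c hc hc'
      simp only [Finset.mem_Icc] at hc hc'
      simp [nuCA_zero rule θ c (hrule0 c)
        (fun k => hsupp _ (by have hk := k.isLt; omega))]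
  have trim2 : ∑ c ∈ Finset.Icc (j - ((2 * r : ℕ) : ℤ) + 1) j,
        ((nuCA s r rule θ (cut (j - r + 1) x) c : ℕ) : ℤ)
      = ∑ c ∈ Finset.Icc (j - (r : ℤ) + 1 - (2 * r : ℕ)) j,
        ((nuCA s r rule θ (cut (j - r + 1) x) c : ℕ) : ℤ) := by
    apply Finset.sum_subset
    · intro t ht
      simp only [Finset.mem_Icc] at *
      omega
    · intro c hc hc'
      simp only [Finset.mem_Icc] at hc hc'
      simp [nuCA_zero rule θ c (hrule0 c)
        (fun k => hsupp' _ (by have hk := k.isLt; omega))]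
  have peel1 := sum_Icc_peel_right (fun c => ((nuCA s r rule θ x c : ℕ) : ℤ))
      (j - ((2 * r : ℕ) : ℤ)) j (by omega)
  have peelx := sum_Icc_peel_left (fun i => ((x i : ℕ) : ℤ)) (j - (r : ℤ)) (j + (r : ℤ))
      (by omega)
  have congrx : ∑ i ∈ Finset.Icc (j - (r : ℤ) + 1) (j + (r : ℤ)),
        ((cut (j - r + 1) x i : ℕ) : ℤ)
      = ∑ i ∈ Finset.Icc (j - (r : ℤ) + 1) (j + (r : ℤ)), ((x i : ℕ) : ℤ) := by
    refine Finset.sum_congr rfl fun i hi => ?_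
    simp only [Finset.mem_Icc] at hi
    rw [hcut1 i (by omega)]
  unfold Star hv
  rw [hcuteq]
  linarith [h1', h2', split1, split2, hupper, trim1, trim2, peel1, peelx, congrx]

end NCAux

/-- `H_θ` is number-conserving iff for every `j ∈ ℤ` the word
`θ_{[j-2r, j]}` avoids `F_R`, i.e. for every `u ∈ A^{2r+1}`,
`ψ_{2r}(u) = u_0 + Σ_{i=0}^{2r-1} [ψ_{i+1}(0^{2r-i} u_{[1,i+1]}) − ψ_i(0^{2r-i} u_{[0,i]})]`
(computed in `ℤ`), where `ψ_m = θ_{j-2r+m}`. -/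
theorem stmt9 (s : ℕ) [NeZero s] (hs : 2 ≤ s) (r : ℕ) (hr : 0 < r)
    {R : Type*} [Fintype R]
    (rule : R → (Fin (2 * r + 1) → Fin s) → Fin s) (θ : ℤ → R) :
    IsNC s (nuCA s r rule θ) ↔
    ∀ j : ℤ, ∀ u : Fin (2 * r + 1) → Fin s,
      ((rule (θ j) u : ℕ) : ℤ) =
        ((u 0 : ℕ) : ℤ) +
        ∑ i : Fin (2 * r),
          ( ((rule (θ (j - (2 * r : ℕ) + (i : ℕ) + 1))
                (fun k : Fin (2 * r + 1) =>
                  if hk : (k : ℕ) < 2 * r - (i : ℕ) then 0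
                  else u ⟨(k : ℕ) - (2 * r - (i : ℕ)) + 1, by
                    have h1 := k.isLt; have h2 := i.isLt; omega⟩) : ℕ) : ℤ)
          - ((rule (θ (j - (2 * r : ℕ) + (i : ℕ)))
                (fun k : Fin (2 * r + 1) =>
                  if hk : (k : ℕ) < 2 * r - (i : ℕ) then 0
                  else u ⟨(k : ℕ) - (2 * r - (i : ℕ)), by
                    have h1 := k.isLt; omega⟩) : ℕ) : ℤ) ) := by
  constructor
  · intro hNC j u
    exact (NCAux.main_bridge rule θ j (NCAux.emb u j) u (NCAux.emb_spec u j)).mpr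
      (NCAux.star_of_NC rule θ hr hNC j u)
  · intro hC
    have hstar : ∀ (j : ℤ) (x : ℤ → Fin s), NCAux.Star rule θ j x := fun j x =>
      (NCAux.main_bridge rule θ j x
        (fun t : Fin (2 * r + 1) => x (j - (r : ℤ) + ((t : ℕ) : ℤ)))
        (fun t => rfl)).mp (hC j _)
    exact NCAux.isNC_of_star rule θ hr hstar
end

section
/- Let A = {0, 1, …, s-1} with s ≥ 2 and let R be a finite set of local rules on A all of radius r > 0. The set NC(R) = { θ : ℤ → R : H_θ is number-conserving } is a subshift of finite type of R^ℤ: there exists a finite set of forbidden words F ⊆ R^{2r+1} such that θ ∈ NC(R) if and only if no factor θ_{[j, j+2r]} (j ∈ ℤ) belongs to F; in particular NC(R) is closed in the product topology and shift-invariant. -/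
open Filter

namespace NCaux
open Finset

variable (s r : ℕ) [NeZero s] {R : Type*} (rule : R → (Fin (2 * r + 1) → Fin s) → Fin s)

noncomputable def Tz (z : ℤ → Fin s) (a b : ℤ) : ℤ := ∑ j ∈ Finset.Icc a b, (z j : ℤ)

def cutc (x : ℤ → Fin s) (a b : ℤ) : ℤ → Fin s := fun j => if a ≤ j ∧ j ≤ b then x j else 0

noncomputable def Phi (θ : ℤ → R) (i : ℤ) (x : ℤ → Fin s) : ℤ :=
  Tz s x (i - r) (i - 1)
    - Tz s (nuCA s r rule θ (cutc s x (i - r) (i + r - 1))) (i - 2 * r) (i - 1)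

def Loc (θ : ℤ → R) (i : ℤ) : Prop :=
  rule (θ i) 0 = 0 ∧ ∀ x : ℤ → Fin s,
    ((rule (θ i) (fun k => x (i - (r : ℤ) + (k : ℕ))) : ℤ) - (x i : ℤ))
      = Phi s r rule θ i x - Phi s r rule θ (i + 1) x

variable {s r}

lemma T_nonneg (z : ℤ → Fin s) (a b : ℤ) : 0 ≤ Tz s z a b :=
  Finset.sum_nonneg fun _ _ => Int.ofNat_nonneg _

lemma T_le (z : ℤ → Fin s) (a b : ℤ) : Tz s z a b ≤ (Finset.Icc a b).card * s := by
  calc Tz s z a b ≤ ∑ _j ∈ Finset.Icc a b, (s : ℤ) :=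
        Finset.sum_le_sum fun j _ => le_of_lt (Int.ofNat_lt.mpr (z j).isLt)
    _ = (Finset.Icc a b).card * s := by rw [Finset.sum_const, nsmul_eq_mul]

lemma IccIco (a b : ℤ) : Finset.Icc a b = Finset.Ico a (b + 1) := by
  ext t; simp [Int.lt_add_one_iff]

lemma T_split (z : ℤ → Fin s) {a b c : ℤ} (h1 : a ≤ c + 1) (h2 : c ≤ b) :
    Tz s z a b = Tz s z a c + Tz s z (c + 1) b := by
  unfold Tz
  rw [IccIco, IccIco, IccIco,
    ← Finset.Ico_union_Ico_eq_Ico h1 (show c + 1 ≤ b + 1 by omega),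
    Finset.sum_union (Finset.Ico_disjoint_Ico_consecutive a (c+1) (b+1))]

lemma T_zero (z : ℤ → Fin s) {a b : ℤ} (h : ∀ j, a ≤ j → j ≤ b → z j = 0) :
    Tz s z a b = 0 := by
  apply Finset.sum_eq_zero
  intro j hj
  rw [Finset.mem_Icc] at hj
  rw [h j hj.1 hj.2]; simp

lemma T_congr (z z' : ℤ → Fin s) {a b : ℤ} (h : ∀ j, a ≤ j → j ≤ b → z j = z' j) :
    Tz s z a b = Tz s z' a b := by
  apply Finset.sum_congr rfl
  intro j hj
  rw [Finset.mem_Icc] at hj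
  rw [h j hj.1 hj.2]

lemma T_single (z : ℤ → Fin s) (a : ℤ) : Tz s z a a = (z a : ℤ) := by
  unfold Tz; rw [Finset.Icc_self, Finset.sum_singleton]

lemma T_shift (z : ℤ → Fin s) (a b c : ℤ) :
    Tz s (fun t => z (t - c)) a b = Tz s z (a - c) (b - c) := by
  unfold Tz
  apply Finset.sum_nbij' (fun t => t - c) (fun t => t + c) <;>
    simp [Finset.mem_Icc] <;> omega


lemma H_apply (θ : ℤ → R) (x : ℤ → Fin s) (i : ℤ) :
    nuCA s r rule θ x i = rule (θ i) (fun k => x (i - (r : ℤ) + (k : ℕ))) := rfl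

lemma H_congr (θ : ℤ → R) (z z' : ℤ → Fin s) (j : ℤ)
    (h : ∀ t, j - r ≤ t → t ≤ j + r → z t = z' t) :
    nuCA s r rule θ z j = nuCA s r rule θ z' j := by
  unfold nuCA
  congr 1
  funext k
  have hk := k.isLt
  exact h _ (by omega) (by omega)

lemma H_zero (θ : ℤ → R) (z : ℤ → Fin s) {a b : ℤ} (j : ℤ)
    (hrule : rule (θ j) 0 = 0)
    (hsupp : ∀ t, t < a ∨ b < t → z t = 0)
    (hj : j < a - r ∨ b + r < j) :
    nuCA s r rule θ z j = 0 := by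
  unfold nuCA
  have hz : (fun k : Fin (2*r+1) => z (j - (r:ℤ) + (k:ℕ))) = 0 := by
    funext k
    have hk := k.isLt
    apply hsupp
    rcases hj with h | h
    · left; omega
    · right; omega
  rw [hz, hrule]

lemma H_zero_fun (θ : ℤ → R) (hrule : ∀ j, rule (θ j) 0 = 0) :
    nuCA s r rule θ 0 = 0 := by
  funext j
  unfold nuCA
  have hz : (fun k : Fin (2*r+1) => (0 : ℤ → Fin s) (j - (r:ℤ) + (k:ℕ))) = 0 := rfl
  rw [hz, hrule]; rfl

lemma Phi_zero (θ : ℤ → R) (x : ℤ → Fin s) (i : ℤ)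
    (hrule : ∀ j, rule (θ j) 0 = 0)
    (hx : ∀ t, i - r ≤ t → t ≤ i + r - 1 → x t = 0) :
    Phi s r rule θ i x = 0 := by
  unfold Phi
  have hcut : cutc s x (i - r) (i + r - 1) = 0 := by
    funext t; unfold cutc
    split_ifs with h
    · exact hx t h.1 h.2
    · rfl
  rw [hcut, H_zero_fun rule θ hrule]
  rw [T_zero x (fun j hj1 hj2 => hx j (by omega) (by omega)),
      T_zero (0 : ℤ → Fin s) (fun j _ _ => rfl)]
  ring

lemma Phi_bound (θ : ℤ → R) (x : ℤ → Fin s) (i : ℤ) :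
    |Phi s r rule θ i x| ≤ 3 * (r : ℤ) * (s : ℤ) := by
  unfold Phi
  have h1 := T_nonneg (s := s) x (i - r) (i - 1)
  have h2 := T_nonneg (s := s) (nuCA s r rule θ (cutc s x (i - r) (i + r - 1))) (i - 2*r) (i - 1)
  have h3 := T_le (s := s) x (i - r) (i - 1)
  have h4 := T_le (s := s) (nuCA s r rule θ (cutc s x (i - r) (i + r - 1))) (i - 2*r) (i - 1)
  have c1 : (Finset.Icc (i - (r:ℤ)) (i - 1)).card = r := by rw [Int.card_Icc]; omega
  have c2 : (Finset.Icc (i - 2*(r:ℤ)) (i - 1)).card = 2 * r := by rw [Int.card_Icc]; omega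
  rw [c1] at h3
  rw [c2] at h4
  have hrs : (0 : ℤ) ≤ (r : ℤ) * s := mul_nonneg (Int.ofNat_nonneg r) (Int.ofNat_nonneg s)
  rw [abs_le]
  constructor
  · push_cast at h4 ⊢; nlinarith
  · push_cast at h3 ⊢; nlinarith

lemma tele (f g : ℤ → ℤ) (hfg : ∀ i, g i = f i - f (i + 1)) (a : ℤ) :
    ∀ n : ℕ, ∑ j ∈ Finset.Icc a (a + (n:ℤ)), g j = f a - f (a + n + 1) := by
  intro n
  induction n with
  | zero => simpa using hfg a
  | succ n ih =>
      have hins : Finset.Icc a (a + ((n:ℤ)+1)) = insert (a + (n:ℤ) + 1) (Finset.Icc a (a + (n:ℤ))) := by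
        ext t; simp only [Finset.mem_Icc, Finset.mem_insert]; omega
      have hcast : (((n:ℕ)+1 : ℕ) : ℤ) = (n:ℤ) + 1 := by push_cast; ring
      rw [hcast, hins, Finset.sum_insert (by simp only [Finset.mem_Icc]; omega)]
      rw [ih, hfg (a + (n:ℤ) + 1)]
      ring_nf


lemma loc_telescope (θ : ℤ → R) (hloc : ∀ i, Loc s r rule θ i) (x : ℤ → Fin s) (n : ℕ) :
    Tz s (nuCA s r rule θ x) (-(n:ℤ)) (n:ℤ) - Tz s x (-(n:ℤ)) (n:ℤ)
      = Phi s r rule θ (-(n:ℤ)) x - Phi s r rule θ ((n:ℤ)+1) x := by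
  have key : ∀ j : ℤ, ((nuCA s r rule θ x j : ℤ) - (x j : ℤ))
      = Phi s r rule θ j x - Phi s r rule θ (j+1) x := fun j => (hloc j).2 x
  have htele := tele (fun j => Phi s r rule θ j x)
    (fun j => ((nuCA s r rule θ x j : ℤ) - (x j : ℤ))) key (-(n:ℤ)) (2*n)
  have hend : (-(n:ℤ)) + ((2*n : ℕ) : ℤ) = (n:ℤ) := by push_cast; ring
  rw [hend, Finset.sum_sub_distrib] at htele
  exact htele

lemma NC_of_loc (θ : ℤ → R) (hloc : ∀ i, Loc s r rule θ i) :
    IsNC s (nuCA s r rule θ) := by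
  have hrule : ∀ j, rule (θ j) 0 = 0 := fun j => (hloc j).1
  constructor
  · exact H_zero_fun rule θ hrule
  · intro x hx
    set a : ℕ → ℕ := fun n => ∑ i ∈ Finset.Icc (-(n:ℤ)) (n:ℤ), ((nuCA s r rule θ x i : ℕ)) with ha_def
    set b : ℕ → ℕ := fun n => ∑ i ∈ Finset.Icc (-(n:ℤ)) (n:ℤ), ((x i : ℕ)) with hb_def
    have hgoal : (fun n : ℕ =>
        ((∑ i ∈ Finset.Icc (-(n : ℤ)) (n : ℤ), ((nuCA s r rule θ x i : ℕ))) : ℝ) /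
        ((∑ i ∈ Finset.Icc (-(n : ℤ)) (n : ℤ), ((x i : ℕ))) : ℝ))
        = fun n : ℕ => ((a n : ℝ)) / ((b n : ℝ)) := by
      funext n
      simp only [ha_def, hb_def]
      push_cast
      rfl
    rw [hgoal]
    have haT : ∀ n : ℕ, ((a n : ℕ) : ℤ) = Tz s (nuCA s r rule θ x) (-(n:ℤ)) (n:ℤ) := by
      intro n; simp only [ha_def, Tz]; push_cast; rfl
    have hbT : ∀ n : ℕ, ((b n : ℕ) : ℤ) = Tz s x (-(n:ℤ)) (n:ℤ) := by
      intro n; simp only [hb_def, Tz]; push_cast; rfl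
    have hab : ∀ n : ℕ, |((a n : ℤ)) - ((b n : ℤ))| ≤ 6 * (r:ℤ) * s := by
      intro n
      have h := loc_telescope rule θ hloc x n
      rw [← haT, ← hbT] at h
      rw [h]
      have b1 := Phi_bound rule θ x (-(n:ℤ))
      have b2 := Phi_bound rule θ x ((n:ℤ)+1)
      calc |Phi s r rule θ (-(n:ℤ)) x - Phi s r rule θ ((n:ℤ)+1) x|
          ≤ |Phi s r rule θ (-(n:ℤ)) x| + |Phi s r rule θ ((n:ℤ)+1) x| := abs_sub _ _
        _ ≤ 6 * (r:ℤ) * s := by linarith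
    have hvalpos : ∀ i : ℤ, x i ≠ 0 → 1 ≤ ((x i : ℕ)) := by
      intro i hi
      rcases Nat.eq_zero_or_pos ((x i : ℕ)) with h | h
      · exact absurd (Fin.ext (by simpa using h)) hi
      · exact h
    by_cases hfin : Set.Finite {i : ℤ | x i ≠ 0}
    · -- finite support: ratio eventually 1
      obtain ⟨i0, hi0⟩ : ∃ i, x i ≠ 0 := by
        by_contra h; push_neg at h; exact hx (funext fun i => h i)
      set N : ℕ := hfin.toFinset.sup Int.natAbs with hN_def
      have hsupp : ∀ j : ℤ, ((N:ℤ) < j ∨ j < -(N:ℤ)) → x j = 0 := by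
        intro j hj
        by_contra hxj
        have hjT : j ∈ hfin.toFinset := hfin.mem_toFinset.mpr hxj
        have := Finset.le_sup (f := Int.natAbs) hjT
        omega
      have hi0N : i0.natAbs ≤ N :=
        Finset.le_sup (f := Int.natAbs) (hfin.mem_toFinset.mpr hi0)
      have hev : ∀ n : ℕ, N + r ≤ n →
          ((a n : ℝ)) / ((b n : ℝ)) = 1 := by
        intro n hn
        have hP1 : Phi s r rule θ (-(n:ℤ)) x = 0 :=
          Phi_zero rule θ x _ hrule (fun t h1 h2 => hsupp t (by omega))
        have hP2 : Phi s r rule θ ((n:ℤ)+1) x = 0 :=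
          Phi_zero rule θ x _ hrule (fun t h1 h2 => hsupp t (by omega))
        have h := loc_telescope rule θ hloc x n
        rw [← haT, ← hbT, hP1, hP2] at h
        have hab2 : a n = b n := by omega
        have hbpos : 0 < b n := by
          have hmem : i0 ∈ Finset.Icc (-(n:ℤ)) (n:ℤ)  := by
            simp only [Finset.mem_Icc]; omega
          have hsum : ((x i0 : ℕ)) ≤ b n :=
            Finset.single_le_sum (f := fun i => ((x i : ℕ))) (fun i _ => Nat.zero_le _) hmem
          have := hvalpos i0 hi0
          omega
        rw [hab2, div_self (Nat.cast_ne_zero.mpr (by omega) : ((b n : ℝ)) ≠ 0)]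
      apply Tendsto.congr' (f₁ := fun _ => (1:ℝ))
      · filter_upwards [Filter.eventually_atTop.mpr ⟨N + r, fun n hn => (hev n hn).symm⟩] with n h
        exact h
      · exact tendsto_const_nhds
    · -- infinite support
      have hinf : {i : ℤ | x i ≠ 0}.Infinite := hfin
      have hbtop : Filter.Tendsto b Filter.atTop Filter.atTop := by
        rw [Filter.tendsto_atTop]
        intro C
        obtain ⟨T, hTsub, hTcard⟩ := hinf.exists_subset_card_eq C
        rw [Filter.eventually_atTop]
        refine ⟨T.sup Int.natAbs, fun n hn => ?_⟩
        have hsub : T ⊆ Finset.Icc (-(n:ℤ)) (n:ℤ) := by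
          intro t ht
          have := Finset.le_sup (f := Int.natAbs) ht
          simp only [Finset.mem_Icc]; omega
        have h1 : T.card • 1 ≤ ∑ i ∈ T, ((x i : ℕ)) :=
          Finset.card_nsmul_le_sum T (fun i => ((x i : ℕ))) 1
            (fun i hi => hvalpos i (hTsub hi))
        have h2 : ∑ i ∈ T, ((x i : ℕ)) ≤ b n :=
          Finset.sum_le_sum_of_subset hsub
        simp only [smul_eq_mul, mul_one] at h1
        omega
      have hbR : Filter.Tendsto (fun n => ((b n : ℝ))) Filter.atTop Filter.atTop :=
        tendsto_natCast_atTop_atTop.comp hbtop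
      have h0 : Filter.Tendsto (fun n => (((a n : ℝ)) - ((b n : ℝ))) / ((b n : ℝ)))
          Filter.atTop (nhds 0) := by
        apply squeeze_zero_norm' (a := fun n => (6 * (r:ℝ) * s) / ((b n : ℝ)))
        · filter_upwards [hbR.eventually_ge_atTop 1] with n hbn
          rw [norm_div, Real.norm_eq_abs, Real.norm_eq_abs,
            abs_of_nonneg (by linarith : (0:ℝ) ≤ ((b n : ℝ)))]
          have habn : |((a n : ℝ)) - ((b n : ℝ))| ≤ 6 * (r:ℝ) * s := by
            have h := hab n
            have h2 : |(((a n : ℤ) : ℝ)) - (((b n : ℤ) : ℝ))| ≤ ((6 * (r:ℤ) * (s:ℤ) : ℤ) : ℝ) := by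
              rw [← Int.cast_sub, ← Int.cast_abs]
              exact_mod_cast h
            push_cast at h2
            exact h2
          gcongr
        · exact Filter.Tendsto.div_atTop tendsto_const_nhds hbR
      apply Tendsto.congr' (f₁ := fun n => (((a n : ℝ)) - ((b n : ℝ))) / ((b n : ℝ)) + 1)
      · filter_upwards [hbR.eventually_ge_atTop 1] with n hbn
        have hbne : ((b n : ℝ)) ≠ 0 := by linarith
        field_simp
        ring
      · have := h0.add (tendsto_const_nhds (x := (1:ℝ)))
        simpa using this


lemma T_restrict (z : ℤ → Fin s) {a b a' b' : ℤ} (h1 : a ≤ a') (h2 : b' ≤ b)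
    (hz : ∀ j, (j < a' ∨ b' < j) → z j = 0) : Tz s z a b = Tz s z a' b' := by
  unfold Tz
  refine (Finset.sum_subset (Finset.Icc_subset_Icc h1 h2) ?_).symm
  intro j hjt hjs
  rw [Finset.mem_Icc] at hjt
  simp only [Finset.mem_Icc, not_and_or, not_le] at hjs
  rw [hz j (by omega)]
  simp

lemma rule_zero_of_NC (θ : ℤ → R) (hNC : IsNC s (nuCA s r rule θ)) (j : ℤ) :
    rule (θ j) 0 = 0 := by
  have h := congrFun hNC.1 j
  exact h

lemma D_of_NC (θ : ℤ → R) (hNC : IsNC s (nuCA s r rule θ)) (y : ℤ → Fin s) (N M : ℕ)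
    (hsupp : ∀ j : ℤ, (j < -(N:ℤ) ∨ (N:ℤ) < j) → y j = 0) (hM : N + r ≤ M) :
    Tz s (nuCA s r rule θ y) (-(M:ℤ)) (M:ℤ) = Tz s y (-(M:ℤ)) (M:ℤ) := by
  have hrule := rule_zero_of_NC rule θ hNC
  by_cases hy : y = 0
  · rw [hy, hNC.1]
  · have htend := hNC.2 y hy
    set A : ℕ := ∑ i ∈ Finset.Icc (-(M:ℤ)) (M:ℤ), ((nuCA s r rule θ y i : ℕ)) with hA_def
    set B : ℕ := ∑ i ∈ Finset.Icc (-(M:ℤ)) (M:ℤ), ((y i : ℕ)) with hB_def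
    have hHzero : ∀ j : ℤ, (j < -(M:ℤ) ∨ (M:ℤ) < j) → nuCA s r rule θ y j = 0 := by
      intro j hj
      exact H_zero rule θ y (a := -(N:ℤ)) (b := (N:ℤ)) j (hrule j) hsupp (by omega)
    have hev : ∀ n : ℕ, M ≤ n →
        ((∑ i ∈ Finset.Icc (-(n : ℤ)) (n : ℤ), ((nuCA s r rule θ y i : ℕ))) : ℝ) /
        ((∑ i ∈ Finset.Icc (-(n : ℤ)) (n : ℤ), ((y i : ℕ))) : ℝ) = ((A:ℝ)) / ((B:ℝ)) := by
      intro n hn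
      have hsubset : Finset.Icc (-(M:ℤ)) (M:ℤ) ⊆ Finset.Icc (-(n:ℤ)) (n:ℤ) :=
        Finset.Icc_subset_Icc (by omega) (by omega)
      have hA : ∑ i ∈ Finset.Icc (-(n : ℤ)) (n : ℤ), ((nuCA s r rule θ y i : ℕ)) = A := by
        refine (Finset.sum_subset hsubset ?_).symm
        intro j hjt hjs
        simp only [Finset.mem_Icc, not_and_or, not_le] at hjs
        rw [hHzero j (by omega)]
        rfl
      have hB' : ∑ i ∈ Finset.Icc (-(n : ℤ)) (n : ℤ), ((y i : ℕ)) = B := by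
        refine (Finset.sum_subset hsubset ?_).symm
        intro j hjt hjs
        simp only [Finset.mem_Icc, not_and_or, not_le] at hjs
        rw [hsupp j (by omega)]
        rfl
      rw [← Nat.cast_sum, ← Nat.cast_sum, hA, hB']
    have hconst : Filter.Tendsto (fun _ : ℕ => ((A:ℝ)) / ((B:ℝ))) Filter.atTop (nhds 1) := by
      apply Filter.Tendsto.congr' _ htend
      filter_upwards [Filter.eventually_atTop.mpr ⟨M, fun n hn => hev n hn⟩] with n h
      exact h
    have hAB : ((A:ℝ)) / ((B:ℝ)) = 1 := (tendsto_nhds_unique hconst tendsto_const_nhds).symm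
    obtain ⟨i0, hi0⟩ : ∃ i, y i ≠ 0 := by
      by_contra h; push_neg at h; exact hy (funext fun i => h i)
    have hi0N : -(N:ℤ) ≤ i0 ∧ i0 ≤ (N:ℤ) := by
      by_contra h
      exact hi0 (hsupp i0 (by omega))
    have hvalpos : 1 ≤ ((y i0 : ℕ)) := by
      rcases Nat.eq_zero_or_pos ((y i0 : ℕ)) with h | h
      · exact absurd (Fin.ext (by simpa using h)) hi0
      · exact h
    have hBpos : 0 < B := by
      have hmem : i0 ∈ Finset.Icc (-(M:ℤ)) (M:ℤ) := by
        simp only [Finset.mem_Icc]; omega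
      have hsum : ((y i0 : ℕ)) ≤ B :=
        Finset.single_le_sum (f := fun i => ((y i : ℕ))) (fun i _ => Nat.zero_le _) hmem
      omega
    have hABnat : A = B := by
      have hBne : ((B:ℝ)) ≠ 0 := Nat.cast_ne_zero.mpr (by omega)
      have := (div_eq_one_iff_eq hBne).mp hAB
      exact_mod_cast this
    have hTA : Tz s (nuCA s r rule θ y) (-(M:ℤ)) (M:ℤ) = ((A:ℕ) : ℤ) := by
      simp only [hA_def, Tz]; push_cast; rfl
    have hTB : Tz s y (-(M:ℤ)) (M:ℤ) = ((B:ℕ) : ℤ) := by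
      simp only [hB_def, Tz]; push_cast; rfl
    rw [hTA, hTB, hABnat]

lemma loc_of_NC (θ : ℤ → R) (hNC : IsNC s (nuCA s r rule θ)) (hr : 0 < r) (i : ℤ) :
    Loc s r rule θ i := by
  have hrule := rule_zero_of_NC rule θ hNC
  refine ⟨hrule i, ?_⟩
  intro x
  unfold Phi
  rw [show i + 1 - 1 = i from by ring, show i + 1 + (r:ℤ) - 1 = i + r from by ring]
  set y := cutc s x (i - r) (i + r) with hy_def
  set x' := cutc s x (i - r) (i + r - 1) with hx'_def
  set x'' := cutc s x (i + 1 - r) (i + r) with hx''_def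
  set M : ℕ := i.natAbs + 2*r + 1 with hM_def
  -- support facts
  have hysupp : ∀ t : ℤ, (t < i - r ∨ i + r < t) → y t = 0 := by
    intro t ht; simp only [hy_def, cutc]; rw [if_neg (by omega)]
  have hx'supp : ∀ t : ℤ, (t < i - r ∨ i + r - 1 < t) → x' t = 0 := by
    intro t ht; simp only [hx'_def, cutc]; rw [if_neg (by omega)]
  have hx''supp : ∀ t : ℤ, (t < i + 1 - r ∨ i + r < t) → x'' t = 0 := by
    intro t ht; simp only [hx''_def, cutc]; rw [if_neg (by omega)]
  -- D lemma instances
  have e1 : Tz s (nuCA s r rule θ y) (-(M:ℤ)) (M:ℤ) = Tz s y (-(M:ℤ)) (M:ℤ) := by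
    apply D_of_NC rule θ hNC y (i.natAbs + r) M
    · intro j hj; exact hysupp j (by omega)
    · omega
  have e3 : Tz s (nuCA s r rule θ x'') (-(M:ℤ)) (M:ℤ) = Tz s x'' (-(M:ℤ)) (M:ℤ) := by
    apply D_of_NC rule θ hNC x'' (i.natAbs + r) M
    · intro j hj; exact hx''supp j (by omega)
    · omega
  -- decompose LHS of e1
  have f1 : Tz s (nuCA s r rule θ y) (-(M:ℤ)) (M:ℤ)
      = Tz s (nuCA s r rule θ y) (i - 2*r) (i - 1) + ((nuCA s r rule θ y i : ℕ) : ℤ)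
        + Tz s (nuCA s r rule θ y) (i + 1) (i + 2*r) := by
    rw [T_restrict (nuCA s r rule θ y) (a' := i - 2*r) (b' := i + 2*r) (by omega) (by omega)
      (fun j hj => H_zero rule θ y (a := i - r) (b := i + r) j (hrule j) hysupp (by omega))]
    rw [T_split (nuCA s r rule θ y) (a := i - 2*r) (b := i + 2*r) (c := i - 1) (by omega) (by omega)]
    rw [show i - 1 + 1 = i from by ring]
    rw [T_split (nuCA s r rule θ y) (a := i) (b := i + 2*r) (c := i) (by omega) (by omega)]
    rw [T_single]
    ring
  have g1 : Tz s y (-(M:ℤ)) (M:ℤ) = Tz s x (i - r) (i + r) := by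
    rw [T_restrict y (a' := i - r) (b' := i + r) (by omega) (by omega)
      (fun j hj => hysupp j (by omega))]
    apply T_congr
    intro j h1 h2
    simp only [hy_def, cutc]; rw [if_pos ⟨h1, h2⟩]
  -- decompose e3
  have f3 : Tz s (nuCA s r rule θ x'') (-(M:ℤ)) (M:ℤ)
      = Tz s (nuCA s r rule θ x'') (i + 1 - 2*r) (i)
        + Tz s (nuCA s r rule θ x'') (i + 1) (i + 2*r) := by
    rw [T_restrict (nuCA s r rule θ x'') (a' := i + 1 - 2*r) (b' := i + 2*r) (by omega) (by omega)
      (fun j hj => H_zero rule θ x'' (a := i + 1 - r) (b := i + r) j (hrule j) hx''supp (by omega))]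
    rw [T_split (nuCA s r rule θ x'') (a := i + 1 - 2*r) (b := i + 2*r) (c := i) (by omega) (by omega)]
  have g3 : Tz s x'' (-(M:ℤ)) (M:ℤ) = Tz s x (i + 1 - r) (i + r) := by
    rw [T_restrict x'' (a' := i + 1 - r) (b' := i + r) (by omega) (by omega)
      (fun j hj => hx''supp j (by omega))]
    apply T_congr
    intro j h1 h2
    simp only [hx''_def, cutc]; rw [if_pos ⟨h1, h2⟩]
  -- congruences
  have c1 : Tz s (nuCA s r rule θ y) (i - 2*r) (i - 1)
      = Tz s (nuCA s r rule θ x') (i - 2*r) (i - 1) := by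
    apply T_congr
    intro j h1 h2
    apply H_congr
    intro t ht1 ht2
    simp only [hy_def, hx'_def, cutc]
    split_ifs with ha hb
    · rfl
    · omega
    · omega
    · rfl
  have c2 : Tz s (nuCA s r rule θ y) (i + 1) (i + 2*r)
      = Tz s (nuCA s r rule θ x'') (i + 1) (i + 2*r) := by
    apply T_congr
    intro j h1 h2
    apply H_congr
    intro t ht1 ht2
    simp only [hy_def, hx''_def, cutc]
    split_ifs with ha hb
    · rfl
    · omega
    · omega
    · rfl
  -- LHS rule term equals H y i
  have hLHS : ((rule (θ i) (fun k => x (i - (r:ℤ) + (k:ℕ))) : ℕ) : ℤ)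
      = ((nuCA s r rule θ y i : ℕ) : ℤ) := by
    have : nuCA s r rule θ y i = nuCA s r rule θ x i := by
      apply H_congr
      intro t ht1 ht2
      simp only [hy_def, cutc]; rw [if_pos ⟨ht1, ht2⟩]
    rw [this]
    rfl
  -- middle slice identities
  have m0 : Tz s x (i - r) (i + r) = ((x (i - r) : ℕ) : ℤ) + Tz s x (i - r + 1) (i + r) := by
    rw [T_split x (a := i - r) (b := i + r) (c := i - r) (by omega) (by omega), T_single]
  have m0' : Tz s x (i + 1 - r) (i + r) = Tz s x (i - r + 1) (i + r) := by
    rw [show i + 1 - (r:ℤ) = i - r + 1 from by ring]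
  have m1 : Tz s x (i - r) (i - 1) = ((x (i - r) : ℕ) : ℤ) + Tz s x (i - r + 1) (i - 1) := by
    rw [T_split x (a := i - r) (b := i - 1) (c := i - r) (by omega) (by omega), T_single]
  have m2 : Tz s x (i + 1 - r) i = Tz s x (i - r + 1) (i - 1) + ((x i : ℕ) : ℤ) := by
    rw [show i + 1 - (r:ℤ) = i - r + 1 from by ring,
      T_split x (a := i - r + 1) (b := i) (c := i - 1) (by omega) (by omega),
      show i - 1 + 1 = i from by ring, T_single]
  rw [hLHS]
  -- now pure linear arithmetic
  rw [f1, g1] at e1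
  rw [f3, g3] at e3
  linarith [e1, e3, c1, c2, m0, m0', m1, m2]


lemma T_shift' (z : ℤ → Fin s) (a b c : ℤ) :
    Tz s (fun t => z (t + c)) a b = Tz s z (a + c) (b + c) := by
  unfold Tz
  apply Finset.sum_nbij' (fun t => t + c) (fun t => t - c) <;>
    simp [Finset.mem_Icc] <;> omega

lemma H_shift (θ : ℤ → R) (z : ℤ → Fin s) (c j : ℤ) :
    nuCA s r rule (fun t => θ (t + c)) (fun t => z (t + c)) j = nuCA s r rule θ z (j + c) := by
  unfold nuCA
  congr 1
  funext k
  congr 1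
  ring

lemma Phi_shift (θ : ℤ → R) (x : ℤ → Fin s) (c i : ℤ) :
    Phi s r rule (fun t => θ (t + c)) i (fun t => x (t + c)) = Phi s r rule θ (i + c) x := by
  unfold Phi
  rw [show i + c - (r:ℤ) = (i - r) + c from by ring,
      show i + c - 1 = (i - 1) + c from by ring,
      show i + c + (r:ℤ) - 1 = (i + r - 1) + c from by ring,
      show i + c - 2*(r:ℤ) = (i - 2*r) + c from by ring]
  rw [T_shift' x (i - r) (i - 1) c]
  congr 1
  have hcut : cutc s (fun t => x (t + c)) (i - r) (i + r - 1)
      = fun t => cutc s x (i - r + c) (i + r - 1 + c) (t + c) := by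
    funext t
    simp only [cutc]
    split_ifs with h1 h2
    · rfl
    · omega
    · omega
    · rfl
  rw [hcut]
  have hH : (nuCA s r rule (fun t => θ (t + c)) (fun t => cutc s x (i - r + c) (i + r - 1 + c) (t + c)))
      = fun j => nuCA s r rule θ (cutc s x (i - r + c) (i + r - 1 + c)) (j + c) :=
    funext fun j => H_shift rule θ (cutc s x (i - r + c) (i + r - 1 + c)) c j
  rw [hH]
  exact T_shift' (nuCA s r rule θ (cutc s x (i - r + c) (i + r - 1 + c))) (i - 2*r) (i - 1) c

lemma loc_shift (θ : ℤ → R) (c i : ℤ) (h : Loc s r rule θ (i + c)) :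
    Loc s r rule (fun t => θ (t + c)) i := by
  obtain ⟨h0, h1⟩ := h
  constructor
  · exact h0
  · intro x'
    have hx' : x' = fun t => (fun u => x' (u - c)) (t + c) := by
      funext t; simp only; congr 1; ring
    rw [hx']
    set x : ℤ → Fin s := fun u => x' (u - c) with hx_def
    have key := h1 x
    rw [Phi_shift rule θ x c i, Phi_shift rule θ x c (i+1),
      show i + 1 + c = i + c + 1 from by ring]
    rw [show (fun t : ℤ => x (t + c)) i = x (i + c) from rfl]
    have harg : (fun k : Fin (2*r+1) => (fun t : ℤ => x (t + c)) (i - (r:ℤ) + (k:ℕ)))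
        = fun k : Fin (2*r+1) => x (i + c - (r:ℤ) + (k:ℕ)) := by
      funext k; simp only; congr 1; ring
    rw [harg]
    exact key

lemma loc_shift_iff (θ : ℤ → R) (c i : ℤ) :
    Loc s r rule (fun t => θ (t + c)) i ↔ Loc s r rule θ (i + c) := by
  constructor
  · intro h
    have h2 := loc_shift (θ := fun t => θ (t + c)) rule (-c) (i + c)
      (by rw [show i + c + -c = i from by ring]; exact h)
    have heq : (fun t : ℤ => θ (t + -c + c)) = θ := by funext t; congr 1; ring
    rwa [heq] at h2
  · exact loc_shift rule θ c i

lemma Phi_congr_theta (θ θ' : ℤ → R) (i : ℤ) (x : ℤ → Fin s)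
    (h : ∀ j, i - 2*r ≤ j → j ≤ i - 1 → θ j = θ' j) :
    Phi s r rule θ i x = Phi s r rule θ' i x := by
  unfold Phi
  congr 1
  apply T_congr
  intro j h1 h2
  unfold nuCA
  rw [h j h1 h2]

lemma loc_congr (θ θ' : ℤ → R) (i : ℤ) (h : ∀ j, i - 2*r ≤ j → j ≤ i → θ j = θ' j)
    (hl : Loc s r rule θ i) : Loc s r rule θ' i := by
  obtain ⟨h0, h1⟩ := hl
  constructor
  · rw [← h i (by omega) (by omega)]; exact h0
  · intro x
    have key := h1 x
    rw [Phi_congr_theta rule θ θ' i x (fun j hj1 hj2 => h j (by omega) (by omega)),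
        Phi_congr_theta rule θ θ' (i+1) x (fun j hj1 hj2 => h j (by omega) (by omega)),
        h i (by omega) (by omega)] at key
    exact key

def GoodW (ψ : Fin (2*r+1) → R) : Prop :=
  Loc s r rule (fun j : ℤ => ψ (if h : 0 ≤ j ∧ j ≤ 2*r then ⟨j.toNat, by omega⟩ else 0)) (2*r)

lemma goodW_iff (θ : ℤ → R) (j : ℤ) :
    GoodW rule (fun m : Fin (2*r+1) => θ (j + (m:ℕ))) ↔ Loc s r rule θ (j + 2*r) := by
  unfold GoodW
  have hcongr : ∀ t : ℤ, (2*(r:ℤ)) - 2*r ≤ t → t ≤ 2*(r:ℤ) →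
      (fun j' : ℤ => (fun m : Fin (2*r+1) => θ (j + (m:ℕ)))
        (if h : 0 ≤ j' ∧ j' ≤ 2*r then (⟨j'.toNat, by omega⟩ : Fin (2*r+1)) else 0)) t
      = (fun t : ℤ => θ (t + j)) t := by
    intro t ht1 ht2
    simp only
    rw [dif_pos (by omega : 0 ≤ t ∧ t ≤ 2*(r:ℤ))]
    simp only [Fin.val_mk]
    congr 1
    omega
  constructor
  · intro h
    have h2 := loc_congr rule _ (fun t : ℤ => θ (t + j)) (2*(r:ℤ)) hcongr h
    rw [loc_shift_iff] at h2
    rwa [show 2*(r:ℤ) + j = j + 2*r from by ring] at h2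
  · intro h
    apply loc_congr rule (fun t : ℤ => θ (t + j)) _ (2*(r:ℤ)) (fun t h1 h2 => (hcongr t h1 h2).symm)
    rw [loc_shift_iff]
    rwa [show 2*(r:ℤ) + j = j + 2*r from by ring]

lemma main_iff (hr : 0 < r) (θ : ℤ → R) :
    IsNC s (nuCA s r rule θ) ↔ ∀ i, Loc s r rule θ i :=
  ⟨fun h i => loc_of_NC rule θ h hr i, fun h => NC_of_loc rule θ h⟩

lemma main_iff_window (hr : 0 < r) (θ : ℤ → R) :
    IsNC s (nuCA s r rule θ) ↔
      ∀ j : ℤ, GoodW rule (fun m : Fin (2*r+1) => θ (j + (m:ℕ))) := by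
  rw [main_iff rule hr θ]
  constructor
  · intro h j
    exact (goodW_iff rule θ j).mpr (h (j + 2*r))
  · intro h i
    have := (goodW_iff rule θ (i - 2*r)).mp (h (i - 2*r))
    rwa [show i - 2*(r:ℤ) + 2*r = i from by ring] at this

end NCaux

/-- `NC(R) = {θ : H_θ is number-conserving}` is a subshift of finite
type of `R^ℤ`: there is a finite set `F` of forbidden words of length `2r+1` such
that `θ ∈ NC(R)` iff no factor `θ_{[j, j+2r]}` belongs to `F`; in particular `NC(R)`
is closed for the product topology and shift-invariant. -/
theorem stmt10 (s : ℕ) [NeZero s] (hs : 2 ≤ s) (r : ℕ) (hr : 0 < r)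
    {R : Type*} [Fintype R] [TopologicalSpace R] [DiscreteTopology R]
    (rule : R → (Fin (2 * r + 1) → Fin s) → Fin s) :
    (∃ F : Set (Fin (2 * r + 1) → R), F.Finite ∧
      ∀ θ : ℤ → R, IsNC s (nuCA s r rule θ) ↔
        ∀ j : ℤ, (fun m : Fin (2 * r + 1) => θ (j + (m : ℕ))) ∉ F)
    ∧ IsClosed {θ : ℤ → R | IsNC s (nuCA s r rule θ)}
    ∧ (fun θ : ℤ → R => fun i : ℤ => θ (i + 1)) ''
          {θ : ℤ → R | IsNC s (nuCA s r rule θ)}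
        = {θ : ℤ → R | IsNC s (nuCA s r rule θ)} := by
  classical
  refine ⟨⟨{ψ : Fin (2*r+1) → R | ¬ NCaux.GoodW rule ψ}, Set.toFinite _, ?_⟩, ?_, ?_⟩
  · intro θ
    rw [NCaux.main_iff_window rule hr θ]
    simp only [Set.mem_setOf_eq, not_not]
  · have hset : {θ : ℤ → R | IsNC s (nuCA s r rule θ)}
        = ⋂ (j : ℤ), (fun θ : ℤ → R => (fun m : Fin (2*r+1) => θ (j + (m:ℕ)))) ⁻¹'
            {ψ : Fin (2*r+1) → R | NCaux.GoodW rule ψ} := by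
      ext θ
      simp only [Set.mem_setOf_eq, Set.mem_iInter, Set.mem_preimage]
      exact NCaux.main_iff_window rule hr θ
    rw [hset]
    apply isClosed_iInter
    intro j
    apply IsClosed.preimage
    · exact continuous_pi fun m => continuous_apply _
    · exact isClosed_discrete _
  · ext θ
    simp only [Set.mem_image, Set.mem_setOf_eq]
    constructor
    · rintro ⟨θ₀, hθ₀, rfl⟩
      rw [NCaux.main_iff rule hr θ₀] at hθ₀
      rw [NCaux.main_iff rule hr]
      intro i
      exact (NCaux.loc_shift_iff rule θ₀ 1 i).mpr (hθ₀ (i+1))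
    · intro hθ
      refine ⟨fun t => θ (t + (-1)), ?_, ?_⟩
      · rw [NCaux.main_iff rule hr] at hθ ⊢
        intro i
        exact (NCaux.loc_shift_iff rule θ (-1) i).mpr (hθ (i + (-1)))
      · funext i
        show θ (i + 1 + -1) = θ i
        congr 1; ring
end
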